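/- Let A ⊆ ℤ be a B₂[⌊g/2⌋] set (every integer has at most ⌊g/2⌋ representations as a sum of two elements of A up to order) and let ℐ be a Sidon system of finite integer sets. Then the family 𝒜 = {a + I : a ∈ A, I ∈ ℐ} is a B₂[g] system: every set S of integers has at most g representations as an unordered sumset of two members of 𝒜. -/

import Mathlib

open Finset Pointwise

private def tr (a : ℤ) (I : Finset ℤ) : Finset ℤ := I.image (fun x => a + x)

private noncomputable def mfun (X : Finset ℤ) : ℤ :=
  if h : X.Nonempty then X.min' h else 0

private lemma tr_add (a b : ℤ) (I J : Finset ℤ) : tr a I + tr b J = tr (a + b) (I + J) := by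
  ext z
  simp only [tr, Finset.mem_add, Finset.mem_image]
  constructor
  · rintro ⟨x, ⟨i, hi, rfl⟩, y, ⟨j, hj, rfl⟩, rfl⟩
    exact ⟨i + j, ⟨i, hi, j, hj, rfl⟩, by ring⟩
  · rintro ⟨w, ⟨i, hi, j, hj, rfl⟩, rfl⟩
    exact ⟨a + i, ⟨i, hi, rfl⟩, b + j, ⟨j, hj, rfl⟩, by ring⟩

private lemma tr_tr (a b : ℤ) (I : Finset ℤ) : tr a (tr b I) = tr (a + b) I := by
  ext z
  simp only [tr, Finset.mem_image]
  constructor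
  · rintro ⟨y, ⟨i, hi, rfl⟩, rfl⟩
    exact ⟨i, hi, by ring⟩
  · rintro ⟨i, hi, rfl⟩
    exact ⟨b + i, ⟨i, hi, rfl⟩, by ring⟩

private lemma tr_zero (I : Finset ℤ) : tr 0 I = I := by
  ext z; simp [tr]

private lemma tr_inj (a : ℤ) (I J : Finset ℤ) (h : tr a I = tr a J) : I = J := by
  have h2 := congrArg (tr (-a)) h
  rwa [tr_tr, tr_tr, neg_add_cancel, tr_zero, tr_zero] at h2

private lemma tr_nonempty (a : ℤ) {I : Finset ℤ} (h : I.Nonempty) : (tr a I).Nonempty :=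
  h.image _

private lemma mfun_tr {M : ℤ} (a : ℤ) {I : Finset ℤ} (h0 : (0:ℤ) ∈ I)
    (hIcc : I ⊆ Finset.Icc (0:ℤ) M) : mfun (tr a I) = a := by
  have hne : I.Nonempty := ⟨0, h0⟩
  have hmono : Monotone (fun x : ℤ => a + x) := fun x y hxy => by dsimp only; omega
  have hmin : ∀ h : I.Nonempty, I.min' h = 0 := by
    intro h
    exact le_antisymm (Finset.min'_le _ _ h0)
      ((Finset.mem_Icc.1 (hIcc (I.min'_mem h))).1)
  have hne' : (tr a I).Nonempty := tr_nonempty a hne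
  rw [mfun, dif_pos hne']
  have h3 : (tr a I).min' hne' = a + I.min' hne := Finset.min'_image hmono I hne'
  rw [h3, hmin hne, add_zero]

private lemma mfun_add {X Y : Finset ℤ} (hX : X.Nonempty) (hY : Y.Nonempty) :
    mfun (X + Y) = mfun X + mfun Y := by
  have hXY : (X + Y).Nonempty := hX.add hY
  rw [mfun, mfun, mfun, dif_pos hX, dif_pos hY, dif_pos hXY]
  apply le_antisymm
  · exact Finset.min'_le _ _ (Finset.add_mem_add (X.min'_mem hX) (Y.min'_mem hY))
  · apply Finset.le_min'
    intro z hz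
    obtain ⟨x, hx, y, hy, rfl⟩ := Finset.mem_add.1 hz
    exact add_le_add (Finset.min'_le _ _ hx) (Finset.min'_le _ _ hy)

private lemma pair_cancel {α : Type*} [DecidableEq α] {x y z : α}
    (h : ({x, y} : Finset α) = {x, z}) : y = z := by
  have hy : y ∈ ({x, z} : Finset α) := by rw [← h]; simp
  have hz : z ∈ ({x, y} : Finset α) := by rw [h]; simp
  simp only [Finset.mem_insert, Finset.mem_singleton] at hy hz
  rcases hy with rfl | rfl
  · rcases hz with rfl | rfl <;> rfl
  · rfl

theorem translate_system_is_B2g (g N : ℕ) (A : Finset ℤ) (ℐ : Finset (Finset ℤ))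
    (hA : A ⊆ Finset.Icc (1 : ℤ) ((N : ℤ) / 2))
    (hI : ∀ I ∈ ℐ, (0 : ℤ) ∈ I ∧ I ⊆ Finset.Icc (0 : ℤ) ((N : ℤ) / 2))
    (hB2 : ∀ n : ℤ,
      (((A ×ˢ A).filter (fun p : ℤ × ℤ => p.1 + p.2 = n)).image (fun p => Sym2.mk p.1 p.2)).card ≤ g / 2)
    (hSidon : ∀ I ∈ ℐ, ∀ J ∈ ℐ, ∀ L ∈ ℐ, ∀ M ∈ ℐ,
      I + J = L + M → ({I, J} : Finset (Finset ℤ)) = {L, M}) :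
    ∀ S : Finset ℤ,
      (((((A ×ˢ ℐ).image (fun p : ℤ × Finset ℤ => p.2.image (fun x => p.1 + x))) ×ˢ
         ((A ×ˢ ℐ).image (fun p : ℤ × Finset ℤ => p.2.image (fun x => p.1 + x)))).filter
        (fun q : Finset ℤ × Finset ℤ => q.1 + q.2 = S)).image (fun q => Sym2.mk q.1 q.2)).card ≤ g := by
  intro S
  classical
  set 𝒜F : Finset (Finset ℤ) := (A ×ˢ ℐ).image (fun p => p.2.image (fun x => p.1 + x))
    with h𝒜F
  set T : Finset (Sym2 (Finset ℤ)) :=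
    ((𝒜F ×ˢ 𝒜F).filter (fun q => q.1 + q.2 = S)).image (fun q => Sym2.mk q.1 q.2) with hTdef
  -- basic structure of members of 𝒜F
  have hmemF : ∀ X ∈ 𝒜F, ∃ a ∈ A, ∃ I ∈ ℐ, X = tr a I := by
    intro X hX
    simp only [h𝒜F, Finset.mem_image, Finset.mem_product] at hX
    obtain ⟨p, ⟨hpa, hpI⟩, rfl⟩ := hX
    exact ⟨p.1, hpa, p.2, hpI, rfl⟩
  have hX' : ∀ X ∈ 𝒜F, X.Nonempty ∧ mfun X ∈ A ∧ tr (-(mfun X)) X ∈ ℐ ∧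
      X = tr (mfun X) (tr (-(mfun X)) X) := by
    intro X hX
    obtain ⟨a, ha, I, hIm, rfl⟩ := hmemF X hX
    obtain ⟨h0, hIcc⟩ := hI I hIm
    have hm : mfun (tr a I) = a := mfun_tr a h0 hIcc
    have hinv : tr (-(mfun (tr a I))) (tr a I) = I := by
      rw [hm, tr_tr, neg_add_cancel, tr_zero]
    refine ⟨tr_nonempty a ⟨0, h0⟩, ?_, ?_, ?_⟩
    · rw [hm]; exact ha
    · rw [hinv]; exact hIm
    · rw [hinv, hm]
  have hTsub : ∀ t ∈ T, ∃ X Y : Finset ℤ, X ∈ 𝒜F ∧ Y ∈ 𝒜F ∧ X + Y = S ∧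
      t = Sym2.mk X Y := by
    intro t ht
    simp only [hTdef, Finset.mem_image, Finset.mem_filter, Finset.mem_product] at ht
    obtain ⟨q, ⟨⟨h1, h2⟩, h3⟩, rfl⟩ := ht
    exact ⟨q.1, q.2, h1, h2, h3, rfl⟩
  -- key uniqueness lemma
  have key : ∀ X₀ Y₀ X Y : Finset ℤ, X₀ ∈ 𝒜F → Y₀ ∈ 𝒜F → X ∈ 𝒜F → Y ∈ 𝒜F →
      X₀ + Y₀ = S → X + Y = S → mfun X = mfun X₀ → mfun Y = mfun Y₀ →
      (X = X₀ ∧ Y = Y₀) ∨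
      (X = tr (mfun X₀) (tr (-(mfun Y₀)) Y₀) ∧ Y = tr (mfun Y₀) (tr (-(mfun X₀)) X₀)) := by
    intro X₀ Y₀ X Y hX₀ hY₀ hX hY hS₀ hS hmx hmy
    obtain ⟨-, -, hI₀, hX₀eq⟩ := hX' X₀ hX₀
    obtain ⟨-, -, hJ₀, hY₀eq⟩ := hX' Y₀ hY₀
    obtain ⟨-, -, hIm, hXeq⟩ := hX' X hX
    obtain ⟨-, -, hJm, hYeq⟩ := hX' Y hY
    rw [hmx] at hIm hXeq
    rw [hmy] at hJm hYeq
    have hsum : tr (mfun X₀ + mfun Y₀) (tr (-(mfun X₀)) X + tr (-(mfun Y₀)) Y)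
        = tr (mfun X₀ + mfun Y₀) (tr (-(mfun X₀)) X₀ + tr (-(mfun Y₀)) Y₀) := by
      rw [← tr_add, ← tr_add, ← hXeq, ← hYeq, ← hX₀eq, ← hY₀eq, hS, hS₀]
    have hIJ := tr_inj _ _ _ hsum
    have hpair := hSidon _ hIm _ hJm _ hI₀ _ hJ₀ hIJ
    have hImem : tr (-(mfun X₀)) X ∈
        ({tr (-(mfun X₀)) X₀, tr (-(mfun Y₀)) Y₀} : Finset (Finset ℤ)) := by
      rw [← hpair]; simp
    rcases Finset.mem_insert.1 hImem with h1 | h1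
    · left
      rw [h1] at hpair
      have h2 := pair_cancel hpair
      constructor
      · rw [hXeq, h1, ← hX₀eq]
      · rw [hYeq, h2, ← hY₀eq]
    · right
      rw [Finset.mem_singleton] at h1
      rw [h1, Finset.pair_comm (tr (-(mfun X₀)) X₀) (tr (-(mfun Y₀)) Y₀)] at hpair
      have h2 := pair_cancel hpair
      exact ⟨by rw [hXeq, h1], by rw [hYeq, h2]⟩
  -- the projection to Sym2 ℤ
  set φ : Sym2 (Finset ℤ) → Sym2 ℤ := Sym2.map mfun with hφ
  have himg : T.image φ ⊆
      ((A ×ˢ A).filter (fun p => p.1 + p.2 = mfun S)).image (fun p => Sym2.mk p.1 p.2) := by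
    intro c hc
    obtain ⟨t, ht, rfl⟩ := Finset.mem_image.1 hc
    obtain ⟨X, Y, hX, hY, hXY, rfl⟩ := hTsub t ht
    obtain ⟨hXne, hXA, -, -⟩ := hX' X hX
    obtain ⟨hYne, hYA, -, -⟩ := hX' Y hY
    refine Finset.mem_image.2 ⟨(mfun X, mfun Y),
      Finset.mem_filter.2 ⟨Finset.mem_product.2 ⟨hXA, hYA⟩, ?_⟩, ?_⟩
    · rw [← hXY, mfun_add hXne hYne]
    · simp [hφ, Sym2.map_pair_eq]
  have hfib : ∀ c ∈ T.image φ, (T.filter (fun t => φ t = c)).card ≤ 2 := by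
    intro c hc
    obtain ⟨t₀, ht₀, rfl⟩ := Finset.mem_image.1 hc
    obtain ⟨X₀, Y₀, hX₀, hY₀, hS₀, rfl⟩ := hTsub t₀ ht₀
    have hsub : T.filter (fun t => φ t = φ (Sym2.mk X₀ Y₀)) ⊆
        {Sym2.mk X₀ Y₀,
         Sym2.mk (tr (mfun X₀) (tr (-(mfun Y₀)) Y₀)) (tr (mfun Y₀) (tr (-(mfun X₀)) X₀))} := by
      intro t ht
      obtain ⟨htT, htc⟩ := Finset.mem_filter.1 ht
      obtain ⟨X, Y, hX, hY, hXY, rfl⟩ := hTsub t htT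
      have hmk : Sym2.mk (mfun X) (mfun Y) = Sym2.mk (mfun X₀) (mfun Y₀) := by
        simpa [hφ, Sym2.map_pair_eq] using htc
      rcases Sym2.eq_iff.1 hmk with ⟨h1, h2⟩ | ⟨h1, h2⟩
      · rcases key X₀ Y₀ X Y hX₀ hY₀ hX hY hS₀ hXY h1 h2 with ⟨e1, e2⟩ | ⟨e1, e2⟩
        · simp [e1, e2]
        · simp [e1, e2]
      · rcases key X₀ Y₀ Y X hX₀ hY₀ hY hX hS₀ (by rw [add_comm]; exact hXY) h2 h1 with
          ⟨e1, e2⟩ | ⟨e1, e2⟩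
        · have : Sym2.mk X Y = Sym2.mk X₀ Y₀ := by rw [e1, e2]; exact Sym2.eq_swap
          simp [this]
        · have : Sym2.mk X Y =
              Sym2.mk (tr (mfun X₀) (tr (-(mfun Y₀)) Y₀)) (tr (mfun Y₀) (tr (-(mfun X₀)) X₀)) := by
            rw [e1, e2]; exact Sym2.eq_swap
          simp [this]
    calc (T.filter (fun t => φ t = φ (Sym2.mk X₀ Y₀))).card
        ≤ _ := Finset.card_le_card hsub
      _ ≤ 2 := (Finset.card_insert_le _ _).trans (by simp)
  calc T.card ≤ 2 * (T.image φ).card := Finset.card_le_mul_card_image T 2 hfib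
    _ ≤ 2 * (g / 2) :=
        Nat.mul_le_mul_left 2 ((Finset.card_le_card himg).trans (hB2 (mfun S)))
    _ ≤ g := by omega
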